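/- Let G = 2, suppose (1/n)XᵀX = I_p, and let r_j = (1/n)⟨y, x^j⟩. Let α ∈ [0,1], λ_s, λ_d ≥ 0 with |r_j| > α λ_s and λ_d = 1 + (1−α)λ_s. Then for any pair (b¹, b²) ∈ ℝ² with b¹·b² ≥ 0 and b¹ + b² = soft(r_j, α λ_s)/(1 + (1−α)λ_s), there exists a global minimizer (β̂¹, β̂²) of the SplitReg objective whose j-th coordinates equal (b¹, b²); more precisely, modifying any global minimizer by setting its j-th coordinates in the two groups to (b¹, b²) yields again a global minimizer. -/

import Mathlib

open Finset

/-- The soft-thresholding operator: `soft z γ = sign(z) * max 0 (|z| - γ)`. -/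
noncomputable def soft (z γ : ℝ) : ℝ := Real.sign z * max 0 (|z| - γ)

/-- The SplitReg objective function for data `y`, design matrix `X`,
elastic net mixing parameter `α`, sparsity penalty `lam_s`, diversity penalty `lam_d`,
and coefficient matrix `β` (one column `β g` per group). -/
noncomputable def splitRegObj {n p G : ℕ} (y : Fin n → ℝ) (X : Matrix (Fin n) (Fin p) ℝ)
    (α lam_s lam_d : ℝ) (β : Fin G → Fin p → ℝ) : ℝ :=
  ∑ g : Fin G,
    ((1 / (2 * (n : ℝ))) * ∑ i, (y i - ∑ j, X i j * β g j) ^ 2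
      + lam_s * ((1 - α) / 2 * ∑ j, (β g j) ^ 2 + α * ∑ j, |β g j|)
      + lam_d / 2 * ∑ h ∈ Finset.univ.erase g, ∑ j, |β g j| * |β h j|)

/-- Auxiliary: per-coordinate objective (general `λ_d`). -/
noncomputable def coordQ (r α lam_s lam_d u v : ℝ) : ℝ :=
  -(r * (u + v)) + (1 + (1 - α) * lam_s) / 2 * (u ^ 2 + v ^ 2)
    + α * lam_s * (|u| + |v|) + lam_d * (|u| * |v|)

/-- Auxiliary: per-coordinate objective when `λ_d = c`. -/
noncomputable def coordF (r c t u v : ℝ) : ℝ :=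
  -(r * (u + v)) + c / 2 * (u ^ 2 + v ^ 2) + t * (|u| + |v|) + c * (|u| * |v|)

/-- Auxiliary: aggregated univariate objective. -/
noncomputable def phi (r c t s : ℝ) : ℝ := -(r * s) + c / 2 * s ^ 2 + t * |s|

lemma rss_decomp {n p : ℕ} (hn : 0 < n) (y : Fin n → ℝ) (X : Matrix (Fin n) (Fin p) ℝ)
    (horth : ∀ j k : Fin p, (1 / (n : ℝ)) * ∑ i, X i j * X i k = if j = k then 1 else 0)
    (b : Fin p → ℝ) :
    (1 / (2 * (n : ℝ))) * ∑ i, (y i - ∑ k, X i k * b k) ^ 2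
      = (∑ i, (y i) ^ 2) / (2 * (n : ℝ))
        - ∑ k, ((1 / (n : ℝ)) * ∑ i, y i * X i k) * b k
        + (1 / 2) * ∑ k, (b k) ^ 2 := by
  have hn0 : (n : ℝ) ≠ 0 := by positivity
  have hX : ∀ j k : Fin p, ∑ i, X i j * X i k = (n : ℝ) * (if j = k then 1 else 0) := by
    intro j k
    have h := horth j k
    field_simp at h
    rw [h]
  have cross : ∑ i, y i * ∑ k, X i k * b k = ∑ k, (∑ i, y i * X i k) * b k := by
    simp_rw [Finset.mul_sum]
    rw [Finset.sum_comm]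
    congr 1; ext k
    rw [Finset.sum_mul]
    congr 1; ext i; ring
  have quad : ∑ i, (∑ k, X i k * b k) ^ 2 = (n : ℝ) * ∑ k, (b k) ^ 2 := by
    have h1 : ∀ i, (∑ k, X i k * b k) ^ 2 = ∑ k, ∑ l, (X i k * X i l) * (b k * b l) := by
      intro i
      rw [sq, Finset.sum_mul_sum]
      congr 1; ext k; congr 1; ext l; ring
    rw [Finset.sum_congr rfl fun i _ => h1 i, Finset.sum_comm]
    have h2 : ∀ k : Fin p, ∑ i, ∑ l, (X i k * X i l) * (b k * b l)
        = ∑ l, (∑ i, X i k * X i l) * (b k * b l) := by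
      intro k
      rw [Finset.sum_comm]
      congr 1; ext l
      rw [Finset.sum_mul]
    rw [Finset.sum_congr rfl fun k _ => h2 k]
    rw [Finset.mul_sum]
    congr 1; ext k
    rw [Finset.sum_congr rfl fun l _ => by rw [hX k l]]
    simp [Finset.mul_sum]
    exact Or.inl (by ring)
  have expand : ∑ i, (y i - ∑ k, X i k * b k) ^ 2
      = ∑ i, (y i) ^ 2 - 2 * ∑ k, (∑ i, y i * X i k) * b k
        + (n : ℝ) * ∑ k, (b k) ^ 2 := by
    have h1 : ∀ i, (y i - ∑ k, X i k * b k) ^ 2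
        = (y i) ^ 2 - 2 * (y i * ∑ k, X i k * b k) + (∑ k, X i k * b k) ^ 2 := by
      intro i; ring
    rw [Finset.sum_congr rfl fun i _ => h1 i, Finset.sum_add_distrib,
      Finset.sum_sub_distrib, ← Finset.mul_sum, cross, quad]
  rw [expand]
  have : ∀ k : Fin p, ((1 / (n : ℝ)) * ∑ i, y i * X i k) * b k
      = (1 / (n : ℝ)) * ((∑ i, y i * X i k) * b k) := fun k => by ring
  rw [Finset.sum_congr rfl fun k _ => this k, ← Finset.mul_sum]
  field_simp

lemma splitReg_decomp {n p : ℕ} (hn : 0 < n) (y : Fin n → ℝ) (X : Matrix (Fin n) (Fin p) ℝ)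
    (α lam_s lam_d : ℝ)
    (horth : ∀ j k : Fin p, (1 / (n : ℝ)) * ∑ i, X i j * X i k = if j = k then 1 else 0)
    (β : Fin 2 → Fin p → ℝ) :
    splitRegObj y X α lam_s lam_d β
      = (∑ i, (y i) ^ 2) / (n : ℝ)
        + ∑ k, coordQ ((1 / (n : ℝ)) * ∑ i, y i * X i k) α lam_s lam_d (β 0 k) (β 1 k) := by
  have e0 : (Finset.univ.erase (0 : Fin 2)) = {1} := by decide
  have e1 : (Finset.univ.erase (1 : Fin 2)) = {0} := by decide
  unfold splitRegObj coordQ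
  rw [Fin.sum_univ_two, e0, e1, Finset.sum_singleton, Finset.sum_singleton,
    rss_decomp hn y X horth (β 0), rss_decomp hn y X horth (β 1)]
  have expandF : ∑ k, (-(((1 / (n : ℝ)) * ∑ i, y i * X i k) * (β 0 k + β 1 k))
            + (1 + (1 - α) * lam_s) / 2 * ((β 0 k) ^ 2 + (β 1 k) ^ 2)
            + α * lam_s * (|β 0 k| + |β 1 k|)
            + lam_d * (|β 0 k| * |β 1 k|))
      = -∑ k, ((1 / (n : ℝ)) * ∑ i, y i * X i k) * β 0 k
        - ∑ k, ((1 / (n : ℝ)) * ∑ i, y i * X i k) * β 1 k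
        + (1 + (1 - α) * lam_s) / 2 * ∑ k, (β 0 k) ^ 2
        + (1 + (1 - α) * lam_s) / 2 * ∑ k, (β 1 k) ^ 2
        + α * lam_s * ∑ k, |β 0 k|
        + α * lam_s * ∑ k, |β 1 k|
        + lam_d * ∑ k, |β 0 k| * |β 1 k| := by
    have m1 : (1 + (1 - α) * lam_s) / 2 * ∑ k, (β 0 k) ^ 2
        = ∑ k, (1 + (1 - α) * lam_s) / 2 * (β 0 k) ^ 2 := by rw [Finset.mul_sum]
    have m2 : (1 + (1 - α) * lam_s) / 2 * ∑ k, (β 1 k) ^ 2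
        = ∑ k, (1 + (1 - α) * lam_s) / 2 * (β 1 k) ^ 2 := by rw [Finset.mul_sum]
    have m3 : α * lam_s * ∑ k, |β 0 k| = ∑ k, α * lam_s * |β 0 k| := by rw [Finset.mul_sum]
    have m4 : α * lam_s * ∑ k, |β 1 k| = ∑ k, α * lam_s * |β 1 k| := by rw [Finset.mul_sum]
    have m5 : lam_d * ∑ k, |β 0 k| * |β 1 k| = ∑ k, lam_d * (|β 0 k| * |β 1 k|) := by
      rw [Finset.mul_sum]
    rw [m1, m2, m3, m4, m5, ← Finset.sum_neg_distrib, ← Finset.sum_sub_distrib,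
      ← Finset.sum_add_distrib, ← Finset.sum_add_distrib, ← Finset.sum_add_distrib,
      ← Finset.sum_add_distrib, ← Finset.sum_add_distrib]
    exact Finset.sum_congr rfl fun k _ => by ring
  rw [expandF]
  have habs : ∑ k, |β 1 k| * |β 0 k| = ∑ k, |β 0 k| * |β 1 k| := by
    congr 1; ext k; ring
  rw [habs]
  ring

lemma phi_min (r c t : ℝ) (hc : 0 < c) (ht : 0 ≤ t) (hr : t < |r|) (s : ℝ) :
    phi r c t (soft r t / c) ≤ phi r c t s := by
  unfold phi soft
  rcases lt_trichotomy r 0 with h | h | h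
  · rw [Real.sign_of_neg h, abs_of_neg h]
    have hmax : max 0 (-r - t) = -r - t := max_eq_right (by linarith [abs_of_neg h ▸ hr])
    rw [hmax]
    have hs0 : -1 * (-r - t) / c ≤ 0 := by
      apply div_nonpos_of_nonpos_of_nonneg <;> nlinarith [abs_of_neg h ▸ hr]
    rw [abs_of_nonpos hs0]
    rcases le_or_gt 0 s with hs | hs
    · rw [abs_of_nonneg hs]
      have key : c * (-1 * (-r - t) / c) = r + t := by field_simp; ring
      nlinarith [sq_nonneg (c * (s - (-1 * (-r - t) / c))), mul_nonneg ht hs,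
        sq_nonneg (c * s - (r + t))]
    · rw [abs_of_neg hs]
      have key : c * (-1 * (-r - t) / c) = r + t := by field_simp; ring
      nlinarith [sq_nonneg (c * (s - (-1 * (-r - t) / c))), sq_nonneg (c * s - (r + t))]
  · subst h; simp at hr; linarith
  · rw [Real.sign_of_pos h, abs_of_pos h]
    have hmax : max 0 (r - t) = r - t := max_eq_right (by linarith [abs_of_pos h ▸ hr])
    rw [hmax]
    have hs0 : 0 ≤ 1 * (r - t) / c := by
      apply div_nonneg <;> nlinarith [abs_of_pos h ▸ hr]
    rw [abs_of_nonneg hs0]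
    rcases le_or_gt 0 s with hs | hs
    · rw [abs_of_nonneg hs]
      have key : c * (1 * (r - t) / c) = r - t := by field_simp
      nlinarith [sq_nonneg (c * s - (r - t))]
    · rw [abs_of_neg hs]
      have key : c * (1 * (r - t) / c) = r - t := by field_simp
      nlinarith [sq_nonneg (c * s - (r - t)), mul_nonneg ht (neg_nonneg.mpr hs.le)]

lemma coordF_ge_phi (r c t u v : ℝ) (hc : 0 < c) (ht : 0 ≤ t) :
    phi r c t (u + v) ≤ coordF r c t u v := by
  unfold phi coordF
  have h1 : u * v ≤ |u| * |v| := by rw [← abs_mul]; exact le_abs_self _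
  have h2 : |u + v| ≤ |u| + |v| := abs_add_le u v
  nlinarith [mul_nonneg hc.le (sub_nonneg.mpr h1), mul_nonneg ht (sub_nonneg.mpr h2)]

lemma coordF_eq_phi (r c t b₁ b₂ : ℝ) (hsign : 0 ≤ b₁ * b₂) :
    coordF r c t b₁ b₂ = phi r c t (b₁ + b₂) := by
  unfold phi coordF
  have h1 : |b₁| * |b₂| = b₁ * b₂ := by rw [← abs_mul, abs_of_nonneg hsign]
  have h2 : |b₁ + b₂| = |b₁| + |b₂| := by
    rcases le_or_gt 0 b₁ with h | h <;> rcases le_or_gt 0 b₂ with h' | h'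
    · rw [abs_of_nonneg h, abs_of_nonneg h', abs_of_nonneg (by linarith)]
    · have : b₂ = 0 ∨ b₁ = 0 := by
        rcases eq_or_lt_of_le h with h0 | h0
        · exact Or.inr h0.symm
        · exact Or.inl (by nlinarith)
      rcases this with h0 | h0 <;> simp [h0]
    · have : b₁ = 0 ∨ b₂ = 0 := by
        rcases eq_or_lt_of_le h' with h0 | h0
        · exact Or.inr h0.symm
        · exact Or.inl (by nlinarith)
      rcases this with h0 | h0 <;> simp [h0]
    · rw [abs_of_neg h, abs_of_neg h', abs_of_neg (by linarith)]; ring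
  rw [h1, h2]; ring

lemma coordF_min (r c t b₁ b₂ u v : ℝ) (hc : 0 < c) (ht : 0 ≤ t) (hr : t < |r|)
    (hsign : 0 ≤ b₁ * b₂) (hsum : b₁ + b₂ = soft r t / c) :
    coordF r c t b₁ b₂ ≤ coordF r c t u v :=
  calc coordF r c t b₁ b₂ = phi r c t (soft r t / c) := by
        rw [coordF_eq_phi r c t b₁ b₂ hsign, hsum]
    _ ≤ phi r c t (u + v) := phi_min r c t hc ht hr (u + v)
    _ ≤ coordF r c t u v := coordF_ge_phi r c t u v hc ht

/-- **Proposition 1, part 2(b) (orthogonal design, `G = 2`).**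
If `|r_j| > α λ_s` and `λ_d = 1 + (1-α) λ_s`, then modifying any global minimizer of the
SplitReg objective by replacing its `j`-th coordinates in the two groups by any pair
`(b₁, b₂)` with `b₁ b₂ ≥ 0` and `b₁ + b₂ = soft(r_j, α λ_s)/(1 + (1-α) λ_s)` again
yields a global minimizer. -/
theorem splitreg_orthogonal_critical_ld
    {n p : ℕ} (hn : 0 < n) (y : Fin n → ℝ) (X : Matrix (Fin n) (Fin p) ℝ)
    (α lam_s lam_d : ℝ) (hα : α ∈ Set.Icc (0 : ℝ) 1) (hs : 0 ≤ lam_s) (hd : 0 ≤ lam_d)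
    (horth : ∀ j k : Fin p, (1 / (n : ℝ)) * ∑ i, X i j * X i k = if j = k then 1 else 0)
    (βhat : Fin 2 → Fin p → ℝ)
    (hmin : ∀ b : Fin 2 → Fin p → ℝ,
      splitRegObj y X α lam_s lam_d βhat ≤ splitRegObj y X α lam_s lam_d b)
    (j : Fin p)
    (hr : α * lam_s < |(1 / (n : ℝ)) * ∑ i, y i * X i j|)
    (hld : lam_d = 1 + (1 - α) * lam_s)
    (b₁ b₂ : ℝ) (hsign : 0 ≤ b₁ * b₂)
    (hsum : b₁ + b₂ = soft ((1 / (n : ℝ)) * ∑ i, y i * X i j) (α * lam_s)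
        / (1 + (1 - α) * lam_s)) :
    ∀ b : Fin 2 → Fin p → ℝ,
      splitRegObj y X α lam_s lam_d
          (fun g k => if k = j then (if g = 0 then b₁ else b₂) else βhat g k)
        ≤ splitRegObj y X α lam_s lam_d b := by
  intro b
  refine le_trans ?_ (hmin b)
  subst hld
  have hc : (0 : ℝ) < 1 + (1 - α) * lam_s := by nlinarith [hα.2, mul_nonneg (sub_nonneg.mpr hα.2) hs]
  have ht : 0 ≤ α * lam_s := mul_nonneg hα.1 hs
  rw [splitReg_decomp hn y X α lam_s _ horth, splitReg_decomp hn y X α lam_s _ horth]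
  apply add_le_add_right
  rw [← Finset.add_sum_erase _ _ (Finset.mem_univ j),
    ← Finset.add_sum_erase _ _ (Finset.mem_univ j)]
  apply add_le_add
  · simp only [if_pos rfl, if_neg (by decide : ¬(1 : Fin 2) = 0)]
    exact coordF_min _ _ _ b₁ b₂ _ _ hc ht hr hsign hsum
  · apply Finset.sum_le_sum
    intro k hk
    have hkj : k ≠ j := Finset.ne_of_mem_erase hk
    simp [hkj]
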